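/- Assume x/(log x - 1 - 1/log x - 1/log^2 x) < π(x) for all x ≥ 1772201. Then for all k with p_k ≥ 1772201, with f_k := p_k^{1+1/k} - p_k, we have f_k < log^2 p_k - log p_k - 1. -/

import Mathlib

open Real

noncomputable def p (k : ℕ) : ℕ := Nat.nth Nat.Prime (k - 1)

lemma exp14_lt : Real.exp 14 < 1772201 := by
  have h := Real.exp_one_lt_d9
  calc Real.exp 14 = Real.exp 1 ^ 14 := by rw [Real.exp_one_pow]; norm_num
    _ < 2.7182818286 ^ 14 := by
        exact pow_lt_pow_left₀ h (Real.exp_pos 1).le (by norm_num)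
    _ < 1772201 := by norm_num

lemma le_exp_fifth {L : ℝ} (hL : 14 ≤ L) : L ≤ Real.exp (L / 5) := by
  have h5 : (0:ℝ) ≤ L / 5 := by linarith
  have hsum := Real.sum_le_exp_of_nonneg h5 6
  simp [Finset.sum_range_succ, Nat.factorial] at hsum
  nlinarith [pow_nonneg (by linarith : (0:ℝ) ≤ L - 14) 2,
    pow_nonneg (by linarith : (0:ℝ) ≤ L - 14) 3,
    pow_nonneg (by linarith : (0:ℝ) ≤ L - 14) 4,
    pow_nonneg (by linarith : (0:ℝ) ≤ L - 14) 5]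

set_option maxHeartbeats 1600000 in
theorem stmt_12
    (axler : ∀ x : ℝ, 1772201 ≤ x →
      x / (Real.log x - 1 - 1 / Real.log x - 1 / (Real.log x) ^ 2) <
        (Nat.primeCounting ⌊x⌋₊ : ℝ)) :
    ∀ k : ℕ, 1772201 ≤ p k →
      (p k : ℝ) ^ (1 + 1 / (k : ℝ)) - (p k : ℝ) <
        (Real.log (p k)) ^ 2 - Real.log (p k) - 1 := by
  intro k hk
  have hk1 : 1 ≤ k := by
    rcases Nat.eq_zero_or_pos k with h | h
    · subst h; simp [p, Nat.nth_prime_zero_eq_two] at hk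
    · exact h
  have hcount : Nat.primeCounting (p k) = k := by
    have : Nat.primeCounting' (Nat.nth Nat.Prime (k-1) + 1) = (k-1) + 1 := by
      rw [Nat.primeCounting', Nat.count_succ, Nat.count_nth_of_infinite Nat.infinite_setOf_prime,
        if_pos (Nat.nth_mem_of_infinite Nat.infinite_setOf_prime _)]
    rw [p, Nat.primeCounting, this]
    omega
  obtain ⟨n, hpn⟩ : ∃ n, n = p k := ⟨p k, rfl⟩
  rw [← hpn] at hk hcount ⊢
  set x : ℝ := (n : ℝ) with hxdef
  clear_value x
  have hx : (1772201:ℝ) ≤ x := by rw [hxdef]; exact_mod_cast hk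
  have hx0 : (0:ℝ) < x := by linarith
  set L : ℝ := Real.log x with hLdef
  clear_value L
  -- L > 14
  have hL14 : 14 < L := by
    have := exp14_lt
    have h2 : Real.exp 14 < x := by linarith
    calc (14:ℝ) = Real.log (Real.exp 14) := (Real.log_exp 14).symm
      _ < L := by rw [hLdef]; exact Real.log_lt_log (Real.exp_pos _) h2
  have hL0 : (0:ℝ) < L := by linarith
  -- L^5 ≤ x
  have hL5 : L ^ 5 ≤ x := by
    have h1 : L ≤ Real.exp (L / 5) := le_exp_fifth hL14.le
    have h2 : L ^ 5 ≤ Real.exp (L / 5) ^ 5 := pow_le_pow_left₀ hL0.le h1 5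
    have h3 : Real.exp (L / 5) ^ 5 = Real.exp L := by
      rw [← Real.exp_nat_mul]; norm_num; ring_nf
    rw [h3] at h2
    rw [hLdef] at h2
    rw [Real.exp_log hx0] at h2
    rw [hLdef]
    exact h2
  set K : ℝ := (k : ℝ) with hKdef
  clear_value K
  have hK1 : (1:ℝ) ≤ K := by rw [hKdef]; exact_mod_cast hk1
  have hK0 : (0:ℝ) < K := by linarith
  -- apply axler
  have hax := axler x hx
  rw [show ⌊x⌋₊ = n by rw [hxdef]; exact Nat.floor_natCast n, hcount] at hax
  set D : ℝ := L - 1 - 1/L - 1/L^2 with hDdef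
  clear_value D
  have hD0 : 0 < D := by
    have h1 : 1/L < 1 := by rw [div_lt_one hL0]; linarith
    have h2 : 1/L^2 < 1 := by rw [div_lt_one (by positivity)]; nlinarith
    simp only [hDdef]; linarith
  have hax' : x / D < K := by rw [hDdef, hLdef, hKdef]; exact hax
  have hxKD : x < K * D := by
    rw [div_lt_iff₀ hD0] at hax'
    exact hax'
  set t : ℝ := L / K with htdef
  clear_value t
  have ht0 : 0 < t := by rw [htdef]; positivity
  have hxt : x * t < D * L := by
    have : x * (L / K) < (K * D) * (L / K) := by
      exact mul_lt_mul_of_pos_right hxKD (div_pos hL0 hK0)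
    calc x * t = x * (L / K) := by rw [htdef]
      _ < (K * D) * (L / K) := this
      _ = D * L := by field_simp
  set A : ℝ := L ^ 2 - L - 1 with hAdef
  clear_value A
  have hA0 : 0 < A := by simp only [hAdef]; nlinarith
  have hDL : D * L = A - 1/L := by
    simp only [hDdef, hAdef]; field_simp
  have hxtA : x * t < A - 1/L := hDL ▸ hxt
  have hALx : 1/L > 0 := by positivity
  have hxtL2 : x * t < L ^ 2 := by nlinarith
  have hA2 : A < L ^ 2 := by simp only [hAdef]; linarith
  have hL2x : L ^ 2 < x := by
    nlinarith [mul_lt_mul_of_pos_left (show (1:ℝ) < L ^ 3 by nlinarith) (pow_pos hL0 2), hL5]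
  -- t < 1
  have ht1 : t < 1 := by
    have h : x * t < x * 1 := by rw [mul_one]; linarith
    exact lt_of_mul_lt_mul_left h hx0.le
  -- A * t < 1/L  (via A*L*t*x < x)
  have hAt : A * t < 1 / L := by
    have h1 : A * L * (x * t) < A * L * L ^ 2 :=
      mul_lt_mul_of_pos_left hxtL2 (mul_pos hA0 hL0)
    have h2 : A * L * L ^ 2 < L ^ 5 := by
      calc A * L * L ^ 2 = A * L ^ 3 := by ring
        _ < L ^ 2 * L ^ 3 := mul_lt_mul_of_pos_right hA2 (pow_pos hL0 3)
        _ = L ^ 5 := by ring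
    have h3 : A * L * (x * t) < x := by linarith
    have hALt1 : A * L * t < 1 := by
      have h4 : (A * L * t) * x < 1 * x := by
        rw [one_mul]
        calc (A * L * t) * x = A * L * (x * t) := by ring
          _ < x := h3
      exact lt_of_mul_lt_mul_right h4 hx0.le
    rw [lt_div_iff₀ hL0]
    calc A * t * L = A * L * t := by ring
      _ < 1 := hALt1
  -- exp bound
  set E : ℝ := Real.exp t with hEdef
  clear_value E
  have hE0 : 0 < E := hEdef ▸ Real.exp_pos t
  have h1mt : (1 - t) * E ≤ 1 := by
    have h0 : 1 - t ≤ Real.exp (-t) := by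
      have := Real.add_one_le_exp (-t); linarith
    calc (1 - t) * E ≤ Real.exp (-t) * E := mul_le_mul_of_nonneg_right h0 hE0.le
      _ = Real.exp (-t) * Real.exp t := by rw [hEdef]
      _ = 1 := by rw [← Real.exp_add]; simp
  -- rewrite goal
  have hrw : x ^ (1 + 1/K) = x * E := by
    rw [Real.rpow_def_of_pos hx0, hEdef, htdef, ← hLdef]
    rw [mul_one_add, mul_one_div, Real.exp_add]
    congr 1
    rw [hLdef, Real.exp_log hx0]
  show x ^ (1 + 1/K) - x < A
  rw [hrw]
  have step1 : x * E - x ≤ x * t * E := by nlinarith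
  have step2 : x * t * E * (1 - t) < A * (1 - t) := by
    have ha : x * t * (1 - t) * E ≤ x * t := by nlinarith [mul_pos (mul_pos hx0 ht0) hE0]
    nlinarith
  have step3 : x * t * E < A := by
    have := lt_of_mul_lt_mul_right step2 (by linarith : (0:ℝ) ≤ 1 - t)
    exact this
  linarith
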